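/- arXiv:2410.07581 — 2 statements merged into one kernel-verified Lean document; each statement's English description precedes it below -/
import Mathlib

section
/- Let a ≥ b ≥ 2, n = a+b+1, I ∈ W_> with q − p ≥ 1, and let H_r = \overline{L_r} R_r for 1 ≤ r ≤ q−p. If D_{H_r} < 0, then either r = q − p, or |R_I| = a (i.e. I ∈ A) and r = 1. -/
open scoped Classical
open MvPolynomial Finset

noncomputable section

/-- `σ⁺_I(a)`: the minimal partial sum of `I` that is at least `a`. -/
def sigmaP (I : List ℕ) (a : ℝ) : ℝ :=
  sInf {x : ℝ | ∃ k ≤ I.length, x = ((I.take k).sum : ℝ) ∧ a ≤ x}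

/-- `Θ⁺_I(a) = σ⁺_I(a) − a`. -/
def thetaP (I : List ℕ) (a : ℝ) : ℝ := sigmaP I a - a

/-- `σ⁻_I(a)`: the maximal partial sum of `I` that is at most `a`. -/
def sigmaM (I : List ℕ) (a : ℝ) : ℝ :=
  sSup {x : ℝ | ∃ k ≤ I.length, x = ((I.take k).sum : ℝ) ∧ x ≤ a}

/-- `Θ⁻_I(a) = a − σ⁻_I(a)`. -/
def thetaM (I : List ℕ) (a : ℝ) : ℝ := a - sigmaM I a

/-- `w_I = i₁(i₂−1)⋯(i_z−1)`. -/
def wI : List ℕ → ℕ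
  | [] => 1
  | i :: t => i * (t.map (· - 1)).prod

/-- `e_I`: the product of elementary symmetric polynomials indexed by the parts of `I`,
in `N` variables. -/
def eComp (N : ℕ) (I : List ℕ) : MvPolynomial (Fin N) ℝ :=
  (I.map fun i => MvPolynomial.esymm (Fin N) ℝ i).prod

/-- The chromatic symmetric function of a graph, truncated to `N` variables. -/
def csf {V : Type} [Fintype V] (G : SimpleGraph V) (N : ℕ) : MvPolynomial (Fin N) ℝ :=
  ∑ κ : V → Fin N,
    if ∀ u v, G.Adj u v → κ u ≠ κ v then ∏ v, MvPolynomial.X (κ v) else 0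

/-- Add a single edge `uv` to a graph. -/
def addE {V : Type} (G : SimpleGraph V) (u v : V) : SimpleGraph V :=
  G ⊔ SimpleGraph.fromRel fun x y => x = u ∧ y = v

/-- The list of consecutive pairs of a list of vertices. -/
def chainE (l : List ℕ) : List (ℕ × ℕ) := l.zip l.tail

/-- The simple graph on `Fin n` with the given list of edges. -/
def graphOfEdges (n : ℕ) (E : List (ℕ × ℕ)) : SimpleGraph (Fin n) :=
  SimpleGraph.fromRel fun u v => ((u : ℕ), (v : ℕ)) ∈ E

/-- The path on `n` vertices. -/
def pathG (n : ℕ) : SimpleGraph (Fin n) := graphOfEdges n (chainE (List.range n))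

/-- The cycle on `n` vertices. -/
def cycleG (n : ℕ) : SimpleGraph (Fin n) :=
  graphOfEdges n (chainE (List.range n ++ [0]))

/-- The tadpole `C_a^l`: a cycle on `a` vertices with a path of `l` edges attached. -/
def tadpoleG (a l : ℕ) : SimpleGraph (Fin (a + l)) :=
  graphOfEdges (a + l)
    (chainE (List.range a ++ [0]) ++ chainE (0 :: (List.range l).map (· + a)))

/-- The theta graph `θ_{abc}`: two vertices (`0` and `a+b+c-2`) joined by three internally
disjoint paths of lengths `a`, `b`, `c`. -/
def thetaG (a b c : ℕ) : SimpleGraph (Fin (a + b + c - 1)) :=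
  graphOfEdges (a + b + c - 1)
    (chainE (0 :: ((List.range (a - 1)).map (· + 1) ++ [a + b + c - 2])) ++
     chainE (0 :: ((List.range (b - 1)).map (· + a) ++ [a + b + c - 2])) ++
     chainE (0 :: ((List.range (c - 1)).map (· + (a + b - 1)) ++ [a + b + c - 2])))

/-- The index `p` defined by `m = i₁ + ⋯ + i_{p-1} + s` with `1 ≤ s ≤ i_p`:
the least `k` with `i₁ + ⋯ + i_k ≥ m`. -/
def pIdx (I : List ℕ) (m : ℕ) : ℕ := sInf {k | m ≤ (I.take k).sum}

/-- The number `s` defined by `m = i₁ + ⋯ + i_{p-1} + s` with `1 ≤ s ≤ i_p`. -/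
def sVal (I : List ℕ) (m : ℕ) : ℕ := m - (I.take (pIdx I m - 1)).sum

/-- The index `q` defined by `m = i₂ + ⋯ + i_q + t` with `1 ≤ t ≤ i_{q+1}`
(convention `i_{z+1} = i₁`). -/
def qIdx (I : List ℕ) (m : ℕ) : ℕ := sInf {k | m ≤ ((I.tail ++ I.take 1).take k).sum}

/-- The number `t` defined by `m = i₂ + ⋯ + i_q + t` with `1 ≤ t ≤ i_{q+1}`. -/
def tVal (I : List ℕ) (m : ℕ) : ℕ := m - ((I.tail ++ I.take 1).take (qIdx I m - 1)).sum

/-- The part `i_p`. -/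
def ipPart (I : List ℕ) (m : ℕ) : ℕ := I.getD (pIdx I m - 1) 0

/-- The second elementary symmetric polynomial evaluated on a list. -/
def e2 : List ℕ → ℤ
  | [] => 0
  | x :: t => (x : ℤ) * t.sum + e2 t

/-- The cycle-chord coefficient `Δ_I(m)`. -/
def DeltaI (I : List ℕ) (m : ℕ) : ℤ :=
  if (I.headI : ℤ) ≤ (ipPart I m : ℤ) - sVal I m then
    (sVal I m : ℤ) * ((ipPart I m : ℤ) - sVal I m - I.headI)
  else
    e2 ((ipPart I m - sVal I m) ::
        ((I.drop (pIdx I m)).take (qIdx I m - pIdx I m) ++ [tVal I m]))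

/-- The length of the prefix `P` in the decomposition `I = PQ`, where `Q` is the shortest
suffix of `I` with `|Q| ≥ a`. -/
def kPhi (a : ℕ) (I : List ℕ) : ℕ := sSup {j | j ≤ I.length ∧ a ≤ (I.drop j).sum}

/-- The transformation `φ`: writing `I = PQ` with `Q` the shortest suffix of modulus `≥ a`,
`φ(I) = I` if `Q = I`, and otherwise `φ(I) = i₁ · reverse(P∖i₁) · Q`. -/
def phi (a : ℕ) (I : List ℕ) : List ℕ :=
  if kPhi a I = 0 then I
  else I.take 1 ++ ((I.drop 1).take (kPhi a I - 1)).reverse ++ I.drop (kPhi a I)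

/-- The starting position of the longest suffix `R_I` of `I` of modulus `≤ a`. -/
def rIdx (a : ℕ) (I : List ℕ) : ℕ := sInf {j | (I.drop j).sum ≤ a}

/-- The partial reversal `ψ(I) = reverse(L_I) R_I`, where `R_I` is the longest suffix of `I`
of modulus `≤ a` and `L_I` is the complementary prefix. -/
def psi (a : ℕ) (I : List ℕ) : List ℕ :=
  (I.take (rIdx a I)).reverse ++ I.drop (rIdx a I)

/-- The clock coefficient `D_I = Θ⁺_I(2) − Θ⁻_{reverse(φ(I))}(a) + Δ_I(b+1)`. -/
def DI (a b : ℕ) (I : List ℕ) : ℝ :=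
  thetaP I 2 - thetaM (phi a I).reverse a + (DeltaI I (b + 1) : ℝ)

end

section Helpers

private lemma take_sum_mono (l : List ℕ) {j k : ℕ} (h : j ≤ k) :
    (l.take j).sum ≤ (l.take k).sum := by
  have h1 : l.take j = (l.take k).take j := by
    rw [List.take_take, Nat.min_eq_left h]
  rw [h1]
  conv_rhs => rw [← List.sum_take_add_sum_drop (l.take k) j]
  exact Nat.le_add_right _ _

private lemma drop_sum_mono (l : List ℕ) {j k : ℕ} (h : j ≤ k) :
    (l.drop k).sum ≤ (l.drop j).sum := by
  have h1 : l.drop k = (l.drop j).drop (k - j) := by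
    rw [List.drop_drop, Nat.add_sub_cancel' h]
  rw [h1]
  conv_rhs => rw [← List.sum_take_add_sum_drop (l.drop j) (k - j)]
  exact Nat.le_add_left _ _

private lemma rev_take_sum (l : List ℕ) (k : ℕ) :
    (l.reverse.take k).sum = (l.drop (l.length - k)).sum := by
  have h := List.rtake_eq_reverse_take_reverse l k
  have h2 : (l.rtake k).sum = (l.reverse.take k).reverse.sum := by rw [h]
  simpa [List.rtake, List.sum_reverse] using h2.symm

private lemma natInf_eq {s : Set ℕ} {K : ℕ} (h : K ∈ s) (h' : ∀ k < K, k ∉ s) :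
    sInf s = K := by
  refine le_antisymm (Nat.sInf_le h) ?_
  by_contra hc
  push_neg at hc
  exact h' _ hc (Nat.sInf_mem ⟨K, h⟩)

end Helpers

set_option maxHeartbeats 1000000 in
/-- For `I ∈ W_>` with `q − p ≥ 1` and `1 ≤ r ≤ q − p`: if `D_{H_r} < 0`, then either
`r = q − p`, or `|R_I| = a` and `r = 1`. -/
theorem stmt16 (a b n : ℕ) (h2 : 2 ≤ b) (hba : b ≤ a) (hn : n = a + b + 1)
    (I : Composition n) (hW : ∀ i ∈ I.blocks, 2 ≤ i)
    (hgt : (ipPart I.blocks (b + 1) : ℤ) - sVal I.blocks (b + 1) < I.blocks.headI)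
    (hqp : pIdx I.blocks (b + 1) + 1 ≤ qIdx I.blocks (b + 1))
    (r : ℕ) (hr1 : 1 ≤ r) (hr2 : r ≤ qIdx I.blocks (b + 1) - pIdx I.blocks (b + 1))
    (hD : DI a b ((I.blocks.take (pIdx I.blocks (b + 1) + r)).reverse
        ++ I.blocks.drop (pIdx I.blocks (b + 1) + r)) < 0) :
    r = qIdx I.blocks (b + 1) - pIdx I.blocks (b + 1) ∨
      ((I.blocks.drop (pIdx I.blocks (b + 1))).sum = a ∧ r = 1) := by
  by_contra hcon
  push_neg at hcon
  obtain ⟨hne, hA⟩ := hcon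
  set L := I.blocks with hLdef
  set p := pIdx L (b + 1) with hpdef
  set q := qIdx L (b + 1) with hqdef
  set P := p + r with hPdef
  set H := (L.take P).reverse ++ L.drop P with hHdef
  set z := L.length with hzdef
  have hLsum : L.sum = n := I.blocks_sum
  have hLne : L ≠ [] := by
    intro h
    rw [h] at hLsum
    simp at hLsum
    omega
  obtain ⟨i1, T, hcons⟩ := List.exists_cons_of_ne_nil hLne
  have hzpos : 1 ≤ z := by
    rw [hzdef, hcons]
    simp
  have hi1 : 2 ≤ i1 := hW i1 (by rw [hcons]; exact List.mem_cons_self)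
  have htake1 : (L.take 1).sum = i1 := by rw [hcons]; simp
  have hheadI : L.headI = i1 := by rw [hcons]; rfl
  -- basic facts about p
  have hpmem : b + 1 ≤ (L.take p).sum := by
    have hz : z ∈ {k | b + 1 ≤ (L.take k).sum} := by
      simp only [Set.mem_setOf_eq, hzdef, List.take_length, hLsum]
      omega
    exact Nat.sInf_mem ⟨z, hz⟩
  have hplt : ∀ k < p, (L.take k).sum < b + 1 := by
    intro k hk
    have hk2 : k < sInf {k | b + 1 ≤ (L.take k).sum} := hk
    have := Nat.notMem_of_lt_sInf hk2
    simp only [Set.mem_setOf_eq, not_le] at this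
    exact this
  have hp1 : 1 ≤ p := by
    by_contra hp0
    push_neg at hp0
    have hp00 : p = 0 := by omega
    rw [hp00] at hpmem
    simp at hpmem
  -- basic facts about q
  have hrotlen : (L.tail ++ L.take 1).length = z := by
    rw [hcons]
    simp [hzdef, hcons]
  have hqz : q ≤ z := by
    apply Nat.sInf_le
    have : ((L.tail ++ L.take 1).take z).sum = n := by
      rw [← hrotlen, List.take_length]
      rw [hcons]
      simp [← hLsum, hcons]
      omega
    simp only [Set.mem_setOf_eq, this]
    omega
  have hq2 : 2 ≤ q := by omega
  have hqlt : ((L.tail ++ L.take 1).take (q - 1)).sum < b + 1 := by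
    have hk2 : q - 1 < sInf {k | b + 1 ≤ ((L.tail ++ L.take 1).take k).sum} :=
      (by omega : q - 1 < q)
    have := Nat.notMem_of_lt_sInf hk2
    simp only [Set.mem_setOf_eq, not_le] at this
    exact this
  have hqtake : ((L.tail ++ L.take 1).take (q - 1)).sum + i1 = (L.take q).sum := by
    have h1 : (L.tail ++ L.take 1).take (q - 1) = L.tail.take (q - 1) := by
      apply List.take_append_of_le_length
      rw [hcons]
      simp [hzdef, hcons] at hqz ⊢
      omega
    rw [h1, hcons]
    have hq' : q = (q - 1) + 1 := by omega
    rw [hq']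
    simp [List.take_succ_cons]
    omega
  have hSq : (L.take q).sum < b + 1 + i1 := by omega
  -- P bounds
  have hPle : P + 1 ≤ q := by omega
  have hq1z : q - 1 < z := by omega
  have hq1sum : (L.take (q - 1)).sum + L[q - 1] = (L.take q).sum := by
    have := List.sum_take_succ L (q - 1) hq1z
    rw [show q - 1 + 1 = q by omega] at this
    omega
  have hq1block : 2 ≤ L[q - 1] := hW _ (List.getElem_mem hq1z)
  have hSPle : (L.take P).sum ≤ (L.take (q - 1)).sum := take_sum_mono L (by omega)
  have hSP3 : (L.take P).sum + 3 ≤ b + 1 + i1 := by omega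
  have hPz : P < z := by omega
  have hP2 : 2 ≤ P := by omega
  have hP1z : P - 1 < z := by omega
  -- iP
  have hiPsum : (L.take (P - 1)).sum + L[P - 1] = (L.take P).sum := by
    have := List.sum_take_succ L (P - 1) hP1z
    rw [show P - 1 + 1 = P by omega] at this
    omega
  set iP := L[P - 1]'hP1z with hiPdef
  have hiP2 : 2 ≤ iP := hW _ (List.getElem_mem hP1z)
  -- SP1 ≥ b + 2
  have hSP1 : b + 2 ≤ (L.take (P - 1)).sum := by
    rcases eq_or_lt_of_le hr1 with hr | hr
    · -- r = 1, so P - 1 = p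
      have hPp : P - 1 = p := by omega
      rw [hPp]
      rcases eq_or_lt_of_le hpmem with hsp | hsp
      · exfalso
        have hdp : (L.drop p).sum = a := by
          have := List.sum_take_add_sum_drop L p
          omega
        exact hA hdp hr.symm
      · omega
    · -- r ≥ 2, so P - 1 ≥ p + 1
      have hpz : p < z := by omega
      have h1 : (L.take p).sum + L[p] = (L.take (p + 1)).sum := by
        have := List.sum_take_succ L p hpz
        omega
      have h2 : 2 ≤ L[p] := hW _ (List.getElem_mem hpz)
      have h3 : (L.take (p + 1)).sum ≤ (L.take (P - 1)).sum := take_sum_mono L (by omega)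
      omega
  have hSP4 : b + 4 ≤ (L.take P).sum := by omega
  -- H facts
  have hMlen : (L.take P).length = P := by
    rw [List.length_take]
    omega
  have hHlen : H.length = z := by
    rw [hHdef]
    simp only [List.length_append, List.length_reverse, hMlen, List.length_drop]
    omega
  have hHsum : H.sum = n := by
    rw [hHdef, List.sum_append, List.sum_reverse, List.sum_take_add_sum_drop, hLsum]
  have hHk : ∀ k ≤ P, (H.take k).sum + (L.take (P - k)).sum = (L.take P).sum := by
    intro k hk
    have h1 : H.take k = ((L.take P).reverse).take k := by
      rw [hHdef]
      exact List.take_append_of_le_length (by rw [List.length_reverse, hMlen]; exact hk)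
    rw [h1, rev_take_sum, hMlen]
    have h2 : (L.take P).take (P - k) = L.take (P - k) := by
      rw [List.take_take, Nat.min_eq_left (by omega)]
    rw [← h2, Nat.add_comm]
    exact List.sum_take_add_sum_drop _ _
  have hH1 : (H.take 1).sum = iP := by
    have := hHk 1 (by omega)
    omega
  have hHP1 : (H.take (P - 1)).sum + i1 = (L.take P).sum := by
    have := hHk (P - 1) (by omega)
    rw [show P - (P - 1) = 1 by omega, htake1] at this
    exact this
  have hHP : (H.take P).sum = (L.take P).sum := by
    have := hHk P le_rfl
    simp at this
    omega
  set u := (H.take (P - 1)).sum with hudef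
  have hHdropP : H.drop P = L.drop P := by
    have h : List.drop ((L.take P).reverse.length) ((L.take P).reverse ++ L.drop P) = L.drop P :=
      List.drop_left
    rw [List.length_reverse, hMlen] at h
    exact h
  -- head of H
  obtain ⟨h0, T2, hHcons⟩ : ∃ x t, H = x :: t := by
    cases hHe : H with
    | nil => rw [hHe] at hHlen; simp at hHlen; omega
    | cons x t => exact ⟨x, t, rfl⟩
  have hHheadI : H.headI = iP := by
    have : (H.take 1).sum = h0 := by rw [hHcons]; simp
    rw [hHcons]
    simp only [List.headI]
    omega
  -- sigmaP H 2 = iP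
  have hsigP : sigmaP H 2 = (iP : ℝ) := by
    unfold sigmaP
    apply IsLeast.csInf_eq
    constructor
    · refine ⟨1, by omega, ?_, ?_⟩
      · rw [hH1]
      · exact_mod_cast (by omega : (2:ℕ) ≤ iP)
    · rintro x ⟨k, hk, rfl, h2x⟩
      rcases Nat.eq_zero_or_pos k with h0' | h0'
      · subst h0'
        norm_num at h2x
      · have hle := take_sum_mono H h0'
        rw [hH1] at hle
        exact_mod_cast hle
  -- kPhi a H = P - 1
  have hdropsum : ∀ k, (H.take k).sum + (H.drop k).sum = n := by
    intro k
    rw [List.sum_take_add_sum_drop, hHsum]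
  have hkPhi : kPhi a H = P - 1 := by
    unfold kPhi
    apply IsGreatest.csSup_eq
    constructor
    · refine ⟨by omega, ?_⟩
      have := hdropsum (P - 1)
      omega
    · rintro j ⟨hjlen, hja⟩
      by_contra hj
      push_neg at hj
      have h1 : (H.drop j).sum ≤ (H.drop P).sum := drop_sum_mono H (by omega)
      have h2 := hdropsum P
      omega
  -- phi a H
  have hphi : phi a H = H.take 1 ++ ((H.drop 1).take (P - 1 - 1)).reverse ++ H.drop (P - 1) := by
    unfold phi
    rw [hkPhi, if_neg (by omega)]
  have hphilen : (phi a H).length = z := by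
    rw [hphi]
    simp only [List.length_append, List.length_take, List.length_reverse, List.length_drop,
      hHlen]
    omega
  have hphidrop1 : (phi a H).drop (P - 1) = H.drop (P - 1) := by
    have hlen : (H.take 1 ++ ((H.drop 1).take (P - 1 - 1)).reverse).length = P - 1 := by
      simp only [List.length_append, List.length_take, List.length_reverse, List.length_drop,
        hHlen]
      omega
    have h : List.drop ((H.take 1 ++ ((H.drop 1).take (P - 1 - 1)).reverse).length)
        ((H.take 1 ++ ((H.drop 1).take (P - 1 - 1)).reverse) ++ H.drop (P - 1)) = H.drop (P - 1) :=
      List.drop_left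
    rw [hlen] at h
    rw [hphi]
    exact h
  have hphidropP : (phi a H).drop P = L.drop P := by
    have h1 : (phi a H).drop P = ((phi a H).drop (P - 1)).drop 1 := by
      rw [List.drop_drop, show P - 1 + 1 = P by omega]
    rw [h1, hphidrop1, List.drop_drop, show P - 1 + 1 = P by omega, hHdropP]
  set Ds := (L.drop P).sum with hDsdef
  have hSPDs : (L.take P).sum + Ds = n := List.sum_take_add_sum_drop L P ▸ (by rw [hLsum])
  set e1 := ((phi a H).drop (P - 1)).sum with he1def
  have hE1 : u + e1 = n := by
    rw [he1def, hphidrop1]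
    exact hdropsum (P - 1)
  set J := (phi a H).reverse with hJdef
  have hJlen : J.length = z := by rw [hJdef, List.length_reverse, hphilen]
  have hJ1 : (J.take (z - P)).sum = Ds := by
    rw [hJdef, rev_take_sum, hphilen, show z - (z - P) = P by omega, hphidropP]
  have hJ2 : (J.take (z - P + 1)).sum = e1 := by
    rw [hJdef, rev_take_sum, hphilen, show z - (z - P + 1) = P - 1 by omega]
  -- sigmaM J a = Ds
  have hsigM : sigmaM J a = (Ds : ℝ) := by
    unfold sigmaM
    apply IsGreatest.csSup_eq
    constructor
    · refine ⟨z - P, by omega, by rw [hJ1], ?_⟩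
      exact_mod_cast (by omega : Ds ≤ a)
    · rintro x ⟨k, hk, rfl, hxa⟩
      by_cases hkc : k ≤ z - P
      · have hle := take_sum_mono J hkc
        rw [hJ1] at hle
        exact_mod_cast hle
      · exfalso
        push_neg at hkc
        have hle := take_sum_mono J (show z - P + 1 ≤ k by omega)
        rw [hJ2] at hle
        have he1a : a + 3 ≤ e1 := by omega
        have : (a : ℝ) + 3 ≤ ((J.take k).sum : ℝ) := by exact_mod_cast by omega
        linarith
  -- pIdx H (b+1) = P
  have hpH : pIdx H (b + 1) = P := by
    unfold pIdx
    apply natInf_eq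
    · simp only [Set.mem_setOf_eq, hHP]
      omega
    · intro k hk
      simp only [Set.mem_setOf_eq, not_le]
      have := take_sum_mono H (show k ≤ P - 1 by omega)
      omega
  have hsH : sVal H (b + 1) = b + 1 - u := by
    unfold sVal
    rw [hpH]
  have hipH : ipPart H (b + 1) = i1 := by
    unfold ipPart
    rw [hpH]
    have hP1H : P - 1 < H.length := by omega
    rw [List.getD_eq_getElem H 0 hP1H]
    have := List.sum_take_succ H (P - 1) hP1H
    rw [show P - 1 + 1 = P by omega] at this
    simp only [hHP] at this
    omega
  -- qIdx H (b+1) = P - 1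
  have hHtaillen : H.tail.length = z - 1 := by rw [List.length_tail, hHlen]
  have hrot : ∀ k ≤ z - 1, ((H.tail ++ H.take 1).take k).sum + iP = (H.take (k + 1)).sum := by
    intro k hk
    have h1 : (H.tail ++ H.take 1).take k = H.tail.take k :=
      List.take_append_of_le_length (by omega)
    have h2 : H.take (1 + k) = H.take 1 ++ (H.drop 1).take k := List.take_add
    rw [h1, show k + 1 = 1 + k by omega, h2, List.sum_append, hH1, List.drop_one]
    omega
  have hrotP1 : ((H.tail ++ H.take 1).take (P - 1)).sum + iP = (L.take P).sum := by
    have := hrot (P - 1) (by omega)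
    rw [show P - 1 + 1 = P by omega, hHP] at this
    exact this
  have hrotP2 : ((H.tail ++ H.take 1).take (P - 2)).sum + iP = u := by
    have := hrot (P - 2) (by omega)
    rw [show P - 2 + 1 = P - 1 by omega] at this
    exact this
  have hqH : qIdx H (b + 1) = P - 1 := by
    unfold qIdx
    apply natInf_eq
    · simp only [Set.mem_setOf_eq]
      omega
    · intro k hk
      simp only [Set.mem_setOf_eq, not_le]
      have := take_sum_mono (H.tail ++ H.take 1) (show k ≤ P - 2 by omega)
      omega
  set w := ((H.tail ++ H.take 1).take (P - 1 - 1)).sum with hwdef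
  have hw : w + iP + i1 = (L.take P).sum := by
    rw [hwdef, show P - 1 - 1 = P - 2 by omega]
    omega
  have htH : tVal H (b + 1) = b + 1 - w := by
    unfold tVal
    rw [hqH]
  -- non-subtraction forms
  have husum : u + i1 = (L.take P).sum := hHP1
  set s' := b + 1 - u with hs'def
  have hs'eq : u + s' = b + 1 := by omega
  set t' := b + 1 - w with ht'def
  have ht'eq : w + t' = b + 1 := by omega
  set g' := i1 - s' with hg'def
  have hg'eq : g' + s' = i1 := by omega
  -- DeltaI H (b+1)
  have hDI : DI a b H = ((iP : ℝ) - 2) - ((a : ℝ) - (Ds : ℝ)) + (DeltaI H (b + 1) : ℝ) := by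
    unfold DI thetaP thetaM
    rw [hsigP, ← hJdef, hsigM]
  rw [hDI] at hD
  unfold DeltaI at hD
  rw [hpH, hqH, hsH, hipH, hHheadI, htH, show P - 1 - P = 0 by omega] at hD
  rw [← hg'def] at hD
  simp only [List.take_zero, List.nil_append] at hD
  clear_value g' t' s' w J e1 Ds u iP H P q p
  clear hsigP hsigM hkPhi hphi hphilen hphidrop1 hphidropP hJ1 hJ2 hJlen hE1 hpH hsH hipH
    hqH htH hrot hrotP1 hrotP2 hHk hH1 hHP hHdropP hHheadI hdropsum hHsum hHlen hHtaillen
    hHcons hplt hqlt hqtake hq1sum hDI hW hgt hA hheadI htake1 hrotlen hqz hpmem hLne hLsum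
    hLdef hpdef hqdef hPdef hHdef hzdef hudef hDsdef he1def hJdef hwdef hs'def ht'def hg'def
    hiPdef hne hr2 hqp hr1 hHP1
  by_cases hc : (iP : ℤ) ≤ (i1 : ℤ) - (s' : ℤ)
  · rw [if_pos hc] at hD
    -- case A : DI = (s'-1)*(SP1 - m) - 2 ≥ 0
    push_cast at hD
    have c1 : (u : ℝ) + s' = b + 1 := by exact_mod_cast hs'eq
    have c2 : (u : ℝ) + i1 = (L.take P).sum := by exact_mod_cast husum
    have c3 : ((L.take (P - 1)).sum : ℝ) + iP = (L.take P).sum := by exact_mod_cast hiPsum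
    have c4 : ((L.take P).sum : ℝ) + Ds = a + b + 1 := by
      have : (L.take P).sum + Ds = a + b + 1 := by omega
      exact_mod_cast this
    have c5 : (b : ℝ) + 2 ≤ (L.take (P - 1)).sum := by exact_mod_cast hSP1
    have c6 : ((L.take P).sum : ℝ) + 3 ≤ b + 1 + i1 := by exact_mod_cast hSP3
    -- let x := s', y := i1 - s' - iP
    have hx : (3 : ℝ) ≤ (s' : ℝ) := by
      have : 3 ≤ s' := by omega
      exact_mod_cast this
    have hy : (1 : ℝ) ≤ (i1 : ℝ) - s' - iP := by linarith
    have key : (2 : ℝ) ≤ ((s' : ℝ) - 1) * ((i1 : ℝ) - s' - iP) := by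
      have h2x : (2 : ℝ) ≤ (s' : ℝ) - 1 := by linarith
      calc (2 : ℝ) = 2 * 1 := by norm_num
        _ ≤ ((s' : ℝ) - 1) * ((i1 : ℝ) - s' - iP) :=
            mul_le_mul h2x hy (by norm_num) (by linarith)
    have expand : (s' : ℝ) * ((i1 : ℝ) - s' - iP)
        = ((s' : ℝ) - 1) * ((i1 : ℝ) - s' - iP) + ((i1 : ℝ) - s' - iP) := by ring
    linarith [key, expand]
  · rw [if_neg hc] at hD
    simp only [e2] at hD
    push_cast at hD
    have c1 : (u : ℝ) + s' = b + 1 := by exact_mod_cast hs'eq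
    have c2 : (u : ℝ) + i1 = (L.take P).sum := by exact_mod_cast husum
    have c3 : ((L.take (P - 1)).sum : ℝ) + iP = (L.take P).sum := by exact_mod_cast hiPsum
    have c4 : ((L.take P).sum : ℝ) + Ds = a + b + 1 := by
      have : (L.take P).sum + Ds = a + b + 1 := by omega
      exact_mod_cast this
    have c6 : ((L.take P).sum : ℝ) + 3 ≤ b + 1 + i1 := by exact_mod_cast hSP3
    have c7 : (g' : ℝ) + s' = i1 := by exact_mod_cast hg'eq
    have c8 : (w : ℝ) + t' = b + 1 := by exact_mod_cast ht'eq
    have c9 : (w : ℝ) + iP + i1 = (L.take P).sum := by exact_mod_cast hw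
    have hiPr : (2 : ℝ) ≤ iP := by exact_mod_cast hiP2
    have hgr : (0 : ℝ) ≤ (g' : ℝ) := Nat.cast_nonneg _
    have ht'r : (1 : ℝ) ≤ (t' : ℝ) := by
      have : 1 ≤ t' := by omega
      exact_mod_cast this
    have key2 : (g' : ℝ) * 1 ≤ (g' : ℝ) * (t' : ℝ) := mul_le_mul_of_nonneg_left ht'r hgr
    linarith [key2]
end

section
/- Let a ≥ b ≥ c ≥ 2, n = a+b+c−1, and let I = i_1⋯i_z be a composition of n with w_I > 0 that has a suffix of modulus exactly a (i.e. I ∈ A). Then c'_I ≥ Δ_I(b+c−1), where c'_I = Σ_{k=2}^{c} Θ⁺_I(k) − Σ_{k=a}^{a+c−2} Θ⁻_{\overline{φ(I)}}(k) + Δ_I(b+c−1); equivalently, Σ_{k=2}^{c} Θ⁺_I(k) ≥ Σ_{k=a}^{a+c−2} Θ⁻_{\overline{φ(I)}}(k). -/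
open scoped Classical
open MvPolynomial Finset

noncomputable section AuxHelpers

/-- minimal prefix sum of `P` that is `≥ m`. -/
def pmin (P : List ℕ) (m : ℕ) : ℕ := sInf {x | (∃ j, x = (P.take j).sum) ∧ m ≤ x}

/-- maximal prefix sum of `P` that is `≤ m`. -/
def pmax (P : List ℕ) (m : ℕ) : ℕ := sSup {x | (∃ j, x = (P.take j).sum) ∧ x ≤ m}

lemma pmax_set_nonempty (P : List ℕ) (m : ℕ) :
    {x | (∃ j, x = (P.take j).sum) ∧ x ≤ m}.Nonempty :=
  ⟨0, ⟨0, by simp⟩, Nat.zero_le m⟩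

lemma pmax_set_bdd (P : List ℕ) (m : ℕ) :
    BddAbove {x | (∃ j, x = (P.take j).sum) ∧ x ≤ m} :=
  ⟨m, fun _ hx => hx.2⟩

lemma pmax_le (P : List ℕ) (m : ℕ) : pmax P m ≤ m :=
  csSup_le (pmax_set_nonempty P m) (fun _ hx => hx.2)

lemma pmax_spec (P : List ℕ) (m : ℕ) : ∃ j ≤ P.length, pmax P m = (P.take j).sum := by
  obtain ⟨⟨j, hj⟩, -⟩ := Nat.sSup_mem (pmax_set_nonempty P m) (pmax_set_bdd P m)
  by_cases h : j ≤ P.length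
  · exact ⟨j, h, hj⟩
  · refine ⟨P.length, le_rfl, ?_⟩
    have h2 : (P.take j).sum = (P.take P.length).sum := by
      rw [List.take_length, List.take_of_length_le (le_of_not_ge h)]
    exact hj.trans h2

lemma le_pmax (P : List ℕ) (m j : ℕ) (h : (P.take j).sum ≤ m) :
    (P.take j).sum ≤ pmax P m :=
  le_csSup (pmax_set_bdd P m) ⟨⟨j, rfl⟩, h⟩

lemma pmin_le (P : List ℕ) (m x : ℕ) (hx : ∃ j, x = (P.take j).sum) (hmx : m ≤ x) :
    pmin P m ≤ x :=
  Nat.sInf_le ⟨hx, hmx⟩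

lemma pmin_spec (P : List ℕ) (m : ℕ) (h : m ≤ P.sum) :
    (∃ j, pmin P m = (P.take j).sum) ∧ m ≤ pmin P m :=
by
  have hne : {x | (∃ j, x = (P.take j).sum) ∧ m ≤ x}.Nonempty := by
    refine ⟨P.sum, ⟨⟨P.length, ?_⟩, h⟩⟩
    simp
  exact Nat.sInf_mem hne

/-- The core counting inequality. -/
lemma coreNat (P : List ℕ) (d c : ℕ) (hd : 1 ≤ d) (hc : 2 ≤ c) (hS : c - d ≤ P.sum) :
    ((Icc 0 (c-2)).sigma (fun m => Ioc (pmax P m) m)).card ≤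
    ((Icc 2 c).sigma (fun k => Ico k (d + pmin P (k - d)))).card := by
  apply Finset.card_le_card_of_injOn
    (f := fun p : (Σ _ : ℕ, ℕ) => if c ≤ d then ⟨p.2+1, p.1+1⟩
      else if p.2 + d ≤ c then ⟨p.2+d, p.1+d⟩ else ⟨p.2+d-(c-1), p.1+d-(c-1)⟩)
  · rintro ⟨m, y⟩ hp
    simp only [mem_coe, mem_sigma, mem_Icc, mem_Ioc] at hp
    obtain ⟨⟨-, hm⟩, hy1, hy2⟩ := hp
    have hy0 : 1 ≤ y := Nat.lt_of_le_of_lt (Nat.zero_le _) hy1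
    dsimp only
    split_ifs with h1 h2
    · simp only [mem_coe, mem_sigma, mem_Icc, mem_Ico]
      have := Nat.zero_le (pmin P (y + 1 - d))
      refine ⟨⟨by omega, by omega⟩, by omega, by omega⟩
    · simp only [mem_coe, mem_sigma, mem_Icc, mem_Ico]
      have harg : y + d - d = y := by omega
      rw [harg]
      have hyS : y ≤ P.sum := by omega
      obtain ⟨⟨j, hj⟩, hy3⟩ := pmin_spec P y hyS
      have hkey : m < pmin P y := by
        by_contra hcon
        have h4 : (P.take j).sum ≤ pmax P m := le_pmax P m j (by omega)
        omega
      refine ⟨⟨by omega, by omega⟩, by omega, by omega⟩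
    · simp only [mem_coe, mem_sigma, mem_Icc, mem_Ico]
      have := Nat.zero_le (pmin P (y + d - (c-1) - d))
      refine ⟨⟨by omega, by omega⟩, by omega, by omega⟩
  · rintro ⟨m, y⟩ hp ⟨m', y'⟩ hq heq
    simp only [coe_sigma, Set.mem_sigma_iff, mem_coe, mem_Icc, mem_Ioc] at hp hq
    obtain ⟨⟨-, hm⟩, hy1, hy2⟩ := hp
    obtain ⟨⟨-, hm'⟩, hy1', hy2'⟩ := hq
    have hy0 : 1 ≤ y := Nat.lt_of_le_of_lt (Nat.zero_le _) hy1
    have hy0' : 1 ≤ y' := Nat.lt_of_le_of_lt (Nat.zero_le _) hy1'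
    dsimp only at heq
    have hgoal : m = m' ∧ y = y' := by
      split_ifs at heq with h1 h2 h2'
      all_goals {
        have e1 := congrArg (fun p : (Σ _ : ℕ, ℕ) => p.fst) heq
        have e2 := congrArg (fun p : (Σ _ : ℕ, ℕ) => p.snd) heq
        simp only at e1 e2
        omega }
    obtain ⟨rfl, rfl⟩ := hgoal
    rfl

lemma core (P : List ℕ) (d c : ℕ) (hd : 1 ≤ d) (hc : 2 ≤ c) (hS : c - d ≤ P.sum) :
    ∑ m ∈ Icc 0 (c-2), ((m : ℝ) - (pmax P m : ℝ)) ≤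
    ∑ k ∈ Icc 2 c, (((d + pmin P (k - d) : ℕ) : ℝ) - (k : ℝ)) := by
  have hL : ∀ m ∈ Icc 0 (c-2), ((m:ℝ) - (pmax P m : ℝ)) = ((Ioc (pmax P m) m).card : ℝ) := by
    intro m _
    rw [Nat.card_Ioc, Nat.cast_sub (pmax_le P m)]
  have hR : ∀ k ∈ Icc 2 c, (((d + pmin P (k-d) : ℕ):ℝ) - (k:ℝ))
      = ((Ico k (d + pmin P (k-d))).card : ℝ) := by
    intro k hk
    simp only [mem_Icc] at hk
    have hle : k ≤ d + pmin P (k - d) := by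
      by_cases hkd : k ≤ d
      · omega
      · have h1 : k - d ≤ P.sum := by omega
        have := (pmin_spec P (k-d) h1).2
        omega
    rw [Nat.card_Ico, Nat.cast_sub hle]
  rw [Finset.sum_congr rfl hL, Finset.sum_congr rfl hR, ← Nat.cast_sum, ← Nat.cast_sum,
    Nat.cast_le, ← Finset.card_sigma, ← Finset.card_sigma]
  exact coreNat P d c hd hc hS

end AuxHelpers

noncomputable section MainBounds
open Finset

lemma boundP (i1 : ℕ) (P' Q : List ℕ) (k : ℕ) (hk2 : 2 ≤ k)
    (hkn : k ≤ (i1 :: (P' ++ Q)).sum) (hS : k - i1 ≤ P'.sum) :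
    ((i1 + pmin P' (k - i1) : ℕ) : ℝ) - (k : ℝ) ≤ thetaP (i1 :: (P' ++ Q)) (k : ℝ) := by
  unfold thetaP sigmaP
  have key : ((i1 + pmin P' (k - i1) : ℕ) : ℝ) ≤
      sInf {x : ℝ | ∃ j ≤ (i1 :: (P' ++ Q)).length, x = (((i1 :: (P' ++ Q)).take j).sum : ℝ)
        ∧ (k:ℝ) ≤ x} := by
    apply le_csInf
    · refine ⟨(((i1 :: (P' ++ Q)).sum : ℕ) : ℝ), ⟨(i1 :: (P' ++ Q)).length, le_rfl, ?_, ?_⟩⟩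
      · rw [List.take_length]
      · exact_mod_cast hkn
    · rintro x ⟨j, hj, rfl, hkx⟩
      rw [Nat.cast_le]
      have hkx' : k ≤ ((i1 :: (P' ++ Q)).take j).sum := by exact_mod_cast hkx
      match j with
      | 0 => simp at hkx'; omega
      | (j' + 1) =>
        rw [List.take_succ_cons, List.sum_cons, List.take_append,
          List.sum_append] at hkx' ⊢
        by_cases hj' : j' ≤ P'.length
        · have hq : Q.take (j' - P'.length) = [] := by
            rw [Nat.sub_eq_zero_of_le hj', List.take_zero]
          rw [hq] at hkx' ⊢
          simp only [List.sum_nil] at hkx' ⊢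
          have h1 : k - i1 ≤ (P'.take j').sum := by omega
          have h2 := pmin_le P' (k - i1) _ ⟨j', rfl⟩ h1
          omega
        · have hp : P'.take j' = P' := List.take_of_length_le (le_of_not_ge hj')
          have h2 := pmin_le P' (k - i1) P'.sum ⟨P'.length, by simp⟩ hS
          rw [hp]
          omega
  linarith

lemma boundM (i1 aa : ℕ) (P' Q : List ℕ) (hQ : Q.sum = aa) (k : ℕ) (hak : aa ≤ k) :
    thetaM (Q.reverse ++ P' ++ [i1]) (k : ℝ) ≤ (k:ℝ) - ((aa + pmax P' (k - aa) : ℕ) : ℝ) := by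
  unfold thetaM sigmaM
  have key : ((aa + pmax P' (k - aa) : ℕ) : ℝ) ≤
      sSup {x : ℝ | ∃ j ≤ (Q.reverse ++ P' ++ [i1]).length,
        x = (((Q.reverse ++ P' ++ [i1]).take j).sum : ℝ) ∧ x ≤ (k:ℝ)} := by
    obtain ⟨j0, hj0len, hj0⟩ := pmax_spec P' (k - aa)
    apply le_csSup
    · exact ⟨(k:ℝ), by rintro x ⟨j, hj, rfl, h⟩; exact h⟩
    · refine ⟨Q.reverse.length + j0, ?_, ?_, ?_⟩
      · simp only [List.length_append, List.length_reverse, List.length_cons,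
          List.length_nil]
        omega
      · have htake : (Q.reverse ++ P' ++ [i1]).take (Q.reverse.length + j0)
            = Q.reverse ++ P'.take j0 := by
          rw [List.append_assoc, List.take_length_add_append, List.take_append_of_le_length hj0len]
        rw [htake, List.sum_append, List.sum_reverse, hQ, hj0]
      · have h1 : pmax P' (k - aa) ≤ k - aa := pmax_le _ _
        have h2 : aa + pmax P' (k - aa) ≤ k := by omega
        exact_mod_cast h2
  linarith

end MainBounds

/-- For `a ≥ b ≥ c ≥ 2` and `I ∈ A` (i.e. `w_I > 0` and some suffix of `I` has modulus
exactly `a`), `c'_I ≥ Δ_I(b+c−1)`, i.e.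
`Σ_{k=2}^{c} Θ⁺_I(k) − Σ_{k=a}^{a+c−2} Θ⁻_{reverse(φ(I))}(k) + Δ_I(b+c−1) ≥ Δ_I(b+c−1)`. -/
theorem stmt18 (a b c n : ℕ) (h2 : 2 ≤ c) (hcb : c ≤ b) (hba : b ≤ a)
    (hn : n = a + b + c - 1) (I : Composition n) (hw : 0 < wI I.blocks)
    (hA : ∃ k ≤ I.blocks.length, (I.blocks.drop k).sum = a) :
    (DeltaI I.blocks (b + c - 1) : ℝ) ≤
      (∑ k ∈ Finset.Icc 2 c, thetaP I.blocks k)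
        - (∑ k ∈ Finset.Icc a (a + c - 2), thetaM (phi a I.blocks).reverse k)
        + (DeltaI I.blocks (b + c - 1) : ℝ) := by
  have hsum : I.blocks.sum = n := I.blocks_sum
  have ha2 : 2 ≤ a := le_trans h2 (le_trans hcb hba)
  have hlne : I.blocks ≠ [] := by
    intro h
    rw [h] at hsum
    simp at hsum
    omega
  obtain ⟨i1, T, hl⟩ := List.exists_cons_of_ne_nil hlne
  have hi1 : 1 ≤ i1 := I.blocks_pos (hl ▸ List.mem_cons_self (a := i1) (l := T))
  -- kPhi facts
  set K := kPhi a I.blocks with hKdef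
  have hKset : {j | j ≤ I.blocks.length ∧ a ≤ (I.blocks.drop j).sum}.Nonempty := by
    refine ⟨0, Nat.zero_le _, ?_⟩
    rw [List.drop_zero, hsum]
    omega
  have hKbdd : BddAbove {j | j ≤ I.blocks.length ∧ a ≤ (I.blocks.drop j).sum} :=
    ⟨I.blocks.length, fun j hj => hj.1⟩
  have hKmem : K ∈ {j | j ≤ I.blocks.length ∧ a ≤ (I.blocks.drop j).sum} :=
    Nat.sSup_mem hKset hKbdd
  obtain ⟨k0, hk0len, hk0sum⟩ := hA
  have hk0K : k0 ≤ K := le_csSup hKbdd ⟨hk0len, le_of_eq hk0sum.symm⟩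
  have hQsum : (I.blocks.drop K).sum = a := by
    have hdk : I.blocks.drop K = (I.blocks.drop k0).drop (K - k0) := by
      rw [List.drop_drop]
      congr 1
      omega
    have hle : ((I.blocks.drop k0).drop (K - k0)).sum ≤ (I.blocks.drop k0).sum := by
      have := List.sum_take_add_sum_drop (I.blocks.drop k0) (K - k0)
      omega
    have h1 : (I.blocks.drop K).sum ≤ a := by rw [hdk]; rw [hk0sum] at hle; exact hle
    exact le_antisymm h1 hKmem.2
  have hK1 : 1 ≤ K := by
    rcases Nat.eq_zero_or_pos K with h | h
    · rw [h, List.drop_zero, hsum] at hQsum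
      omega
    · exact h
  obtain ⟨K', hKK'⟩ : ∃ K'', K = K'' + 1 := ⟨K - 1, by omega⟩
  set P' := T.take K' with hP'def
  set Q := T.drop K' with hQdef
  have hTPQ : T = P' ++ Q := (List.take_append_drop K' T).symm
  have hdropK : I.blocks.drop K = Q := by
    rw [hKK', hl, List.drop_succ_cons]
  have hQa : Q.sum = a := by rw [← hdropK]; exact hQsum
  have hphi : (phi a I.blocks).reverse = Q.reverse ++ P' ++ [i1] := by
    unfold phi
    rw [if_neg (by omega : ¬ kPhi a I.blocks = 0)]
    rw [← hKdef]
    have h1 : I.blocks.take 1 = [i1] := by rw [hl]; rfl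
    have h2 : (I.blocks.drop 1).take (K - 1) = P' := by
      rw [hKK', hl, List.drop_one, List.tail_cons, Nat.add_sub_cancel, hP'def]
    rw [h1, h2, hdropK]
    simp [List.reverse_append]
  have hsum2 : i1 + P'.sum + a = n := by
    have h1 : I.blocks.sum = i1 + (P'.sum + Q.sum) := by
      rw [hl, hTPQ, List.sum_cons, List.sum_append]
    rw [h1, hQa] at hsum
    omega
  have hcP : c - i1 ≤ P'.sum := by omega
  -- Bound the thetaM sum
  have hM : ∑ k ∈ Finset.Icc a (a + c - 2), thetaM (phi a I.blocks).reverse (k:ℝ) ≤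
      ∑ k ∈ Finset.Icc a (a + c - 2), ((k:ℝ) - ((a + pmax P' (k - a) : ℕ) : ℝ)) := by
    apply Finset.sum_le_sum
    intro k hk
    rw [hphi]
    exact boundM i1 a P' Q hQa k (Finset.mem_Icc.mp hk).1
  -- Bound the thetaP sum
  have hP : ∑ k ∈ Finset.Icc 2 c, (((i1 + pmin P' (k - i1) : ℕ) : ℝ) - (k:ℝ)) ≤
      ∑ k ∈ Finset.Icc 2 c, thetaP I.blocks (k:ℝ) := by
    apply Finset.sum_le_sum
    intro k hk
    obtain ⟨hk2, hkc⟩ := Finset.mem_Icc.mp hk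
    rw [hl, hTPQ]
    apply boundP i1 P' Q k hk2
    · have : (i1 :: (P' ++ Q)).sum = n := by rw [← hTPQ, ← hl]; exact hsum
      omega
    · omega
  -- Reindex the thetaM bound sum
  have hre : ∑ k ∈ Finset.Icc a (a + c - 2), ((k:ℝ) - ((a + pmax P' (k - a) : ℕ) : ℝ))
      = ∑ m ∈ Finset.Icc 0 (c-2), ((m:ℝ) - (pmax P' m : ℝ)) := by
    have h1 : Finset.Icc a (a + c - 2) = Finset.map (addLeftEmbedding a) (Finset.Icc 0 (c-2)) := by
      rw [Finset.map_add_left_Icc]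
      congr 1 <;> omega
    rw [h1, Finset.sum_map]
    apply Finset.sum_congr rfl
    intro m hm
    have h2 : addLeftEmbedding a m = a + m := rfl
    rw [h2]
    have h3 : a + m - a = m := by omega
    rw [h3]
    push_cast
    ring
  have hcore := core P' i1 c hi1 h2 hcP
  rw [hre] at hM
  linarith
end
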